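/- Let M be a monoid and let U be the functor from the category of finite M-sets (finite sets equipped with an M-action, with M-equivariant maps) to sets, sending a finite M-set to its underlying set. For a finite set S, let U^S denote the pointwise S-th power of U, i.e. the functor sending a finite M-set X to the set of functions S → U X. Then every natural transformation γ : U^S ⟶ U factors uniquely as a projection followed by an endotransformation of U: there exist a unique element s ∈ S and a unique natural transformation δ : U ⟶ U such that γ_X(f) = δ_X(f(s)) for every finite M-set X and every function f : S → U X. -/

import Mathlib

open CategoryTheory

universe u

namespace Stmt10

variable (M : Type u) [Monoid M]

/-- A finite `M`-set: a finite set equipped with an action of the monoid `M`. -/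
structure FinMSet where
  carrier : Type u
  [finite : Finite carrier]
  [mulAction : MulAction M carrier]

attribute [instance] FinMSet.finite FinMSet.mulAction

variable {M} in
/-- An `M`-equivariant map of finite `M`-sets. -/
structure FinMSetHom (A B : FinMSet M) where
  toFun : A.carrier → B.carrier
  equivariant : ∀ (m : M) (x : A.carrier), toFun (m • x) = m • toFun x

/-- The category of finite `M`-sets and `M`-equivariant maps. -/
instance : Category (FinMSet M) where
  Hom := FinMSetHom
  id A := ⟨id, fun _ _ => rfl⟩
  comp f g := ⟨g.toFun ∘ f.toFun, fun m x => by
    simp only [Function.comp_apply, f.equivariant, g.equivariant]⟩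
  id_comp _ := rfl
  comp_id _ := rfl
  assoc _ _ _ := rfl

/-- The forgetful functor from finite `M`-sets to sets, sending a finite `M`-set to its
underlying set. -/
def U : FinMSet M ⥤ Type u where
  obj A := A.carrier
  map f := TypeCat.ofHom f.toFun
  map_id _ := rfl
  map_comp _ _ := rfl

/-- The pointwise `S`-th power `U^S` of the forgetful functor `U`. -/
def Upow (S : Type u) : FinMSet M ⥤ Type u where
  obj A := S → A.carrier
  map f := TypeCat.ofHom (fun g => f.toFun ∘ g)
  map_id _ := rfl
  map_comp _ _ := rfl

variable {M} in
/-- A finite set equipped with the trivial `M`-action. -/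
def trivObj (T : Type u) [Finite T] : FinMSet M where
  carrier := T
  mulAction :=
    { smul := fun _ t => t
      one_smul := fun _ => rfl
      mul_smul := fun _ _ _ => rfl }

variable {M} in
/-- The `S`-th power of a finite `M`-set, with the pointwise action. -/
def powObj (S : Type u) [Finite S] (X : FinMSet M) : FinMSet M where
  carrier := S → X.carrier
  mulAction :=
    { smul := fun m g s => m • g s
      one_smul := fun g => funext fun s => one_smul M (g s)
      mul_smul := fun m n g => funext fun s => mul_smul m n (g s) }

variable {M} in
/-- `S` (trivial action) times the `S`-th power of `X` (pointwise action). -/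
def zObj (S : Type u) [Finite S] (X : FinMSet M) : FinMSet M where
  carrier := S × (S → X.carrier)
  mulAction :=
    { smul := fun m p => (p.1, fun s => m • p.2 s)
      one_smul := fun p => by
        ext
        · rfl
        · exact one_smul M _
      mul_smul := fun m n p => by
        ext
        · rfl
        · exact mul_smul m n _ }

variable {M} in
/-- First projection from `zObj` to the trivially-acted `S`. -/
def proj1 (S : Type u) [Finite S] (X : FinMSet M) : zObj S X ⟶ trivObj S :=
  ⟨Prod.fst, fun _ _ => rfl⟩

variable {M} in
/-- Second projection from `zObj` to the power object. -/
def proj2 (S : Type u) [Finite S] (X : FinMSet M) : zObj S X ⟶ powObj S X :=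
  ⟨Prod.snd, fun _ _ => rfl⟩

variable {M} in
/-- Evaluation of the second component at the first component. -/
def evalPair (S : Type u) [Finite S] (X : FinMSet M) : zObj S X ⟶ X :=
  ⟨fun p => p.2 p.1, fun _ _ => rfl⟩

variable {M} in
/-- Evaluation at a point of the power object. -/
def evalAt (S : Type u) [Finite S] (X : FinMSet M) (s : S) : powObj S X ⟶ X :=
  ⟨fun g => g s, fun _ _ => rfl⟩

variable {M} in
/-- A constant map from the one-point `M`-set into a trivially-acted finite set. -/
def fromPt (T : Type u) [Finite T] (t : T) : (trivObj PUnit.{u+1} : FinMSet M) ⟶ trivObj T :=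
  ⟨fun _ => t, fun _ _ => rfl⟩

variable {M} in
/-- The endotransformation of `U` induced by `γ` via constant functions. -/
def deltaOf (S : Type u) [Finite S] (γ : Upow M S ⟶ U M) : U M ⟶ U M where
  app X := TypeCat.ofHom (fun x => γ.app X (fun _ => x))
  naturality X Y g := by
    ext x
    have h := types_congr_hom (γ.naturality g) (fun _ => x)
    exact h

variable {M} in
/-- Any natural `δ : U ⟶ U` is the identity on trivially-acted finite sets. -/
theorem delta_triv_apply (δ : U M ⟶ U M) (T : Type u) [Finite T] (t : T) :
    δ.app (trivObj T) t = t := by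
  have h := types_congr_hom (δ.naturality (fromPt (M := M) T t)) PUnit.unit
  have hpt : δ.app (trivObj PUnit.{u+1}) PUnit.unit = PUnit.unit := rfl
  exact h

/-- Statement 10: every natural transformation `γ : U^S ⟶ U` factors uniquely as a
projection followed by an endotransformation of `U`: there are a unique `s ∈ S` and a
unique `δ : U ⟶ U` with `γ_X (f) = δ_X (f s)` for all finite `M`-sets `X` and `f : S → X`. -/
theorem power_to_forget_factors_uniquely (S : Type u) [Finite S]
    (γ : Upow M S ⟶ U M) :
    ∃! p : S × (U M ⟶ U M), ∀ (X : FinMSet M) (f : S → X.carrier),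
      γ.app X f = p.2.app X (f p.1) := by
  set s₀ : S := γ.app (trivObj S) id with hs₀
  set δ : U M ⟶ U M := deltaOf S γ with hδ
  have key : ∀ (X : FinMSet M) (f : S → X.carrier),
      γ.app X f = δ.app X (f s₀) := by
    intro X f
    -- the element of `U^S` at `zObj S X`
    set F : S → (zObj S X).carrier := fun s => (s, f) with hF
    -- compute the two components of `γ.app (zObj S X) F`
    have h1 : (γ.app (zObj S X) F).1 = s₀ := by
      have h := types_congr_hom (γ.naturality (proj1 S X)) F
      have : γ.app (trivObj S) ((proj1 S X).toFun ∘ F) = (proj1 S X).toFun (γ.app (zObj S X) F) := by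
        exact h
      have hid : (proj1 S X).toFun ∘ F = id := rfl
      rw [hid] at this
      exact this.symm
    have h2 : (γ.app (zObj S X) F).2 = γ.app (powObj S X) (fun _ => f) := by
      have h := types_congr_hom (γ.naturality (proj2 S X)) F
      have : γ.app (powObj S X) ((proj2 S X).toFun ∘ F) = (proj2 S X).toFun (γ.app (zObj S X) F) := by
        exact h
      have hc : (proj2 S X).toFun ∘ F = fun _ => f := rfl
      rw [hc] at this
      exact this.symm
    -- naturality along the pair-evaluation map
    have h3 : γ.app X f = (γ.app (zObj S X) F).2 ((γ.app (zObj S X) F).1) := by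
      have h := types_congr_hom (γ.naturality (evalPair S X)) F
      have : γ.app X ((evalPair S X).toFun ∘ F) = (evalPair S X).toFun (γ.app (zObj S X) F) := by
        exact h
      have hc : (evalPair S X).toFun ∘ F = f := rfl
      rw [hc] at this
      exact this
    -- naturality along evaluation at `s₀`
    have h4 : (γ.app (powObj S X) (fun _ => f)) s₀ = γ.app X (fun _ => f s₀) := by
      have h := types_congr_hom (γ.naturality (evalAt S X s₀)) (fun _ => f)
      have : γ.app X ((evalAt S X s₀).toFun ∘ (fun _ => f)) =
          (evalAt S X s₀).toFun (γ.app (powObj S X) (fun _ => f)) := by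
        exact h
      exact this.symm
    exact h3.trans (by rw [h1, h2]; exact h4)
  refine ⟨(s₀, δ), key, ?_⟩
  rintro ⟨s₁, δ₁⟩ hp
  have hs : s₁ = s₀ := by
    have h := hp (trivObj S) id
    have : γ.app (trivObj S) id = s₁ := by
      rw [h]
      exact delta_triv_apply δ₁ S s₁
    rw [hs₀]
    exact this.symm
  have hd : δ₁ = δ := by
    ext X x
    have h := hp X (fun _ => x)
    have h' := key X (fun _ => x)
    rw [h] at h'
    exact h'
  simp [hs, hd]
end Stmt10
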